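/- Let p = (p_n)_{n∈F} be a probability vector indexed by a finite set F and let (ρ_n)_{n∈F} be a family of density matrices on ℂ^d. Then S(∑_n p_n ρ_n) ≤ H(p) + ∑_n p_n S(ρ_n), i.e., the von Neumann entropy of a mixture is at most the Shannon entropy of the mixing distribution plus the average von Neumann entropy of the components. -/

import Mathlib

open Matrix Polynomial
open scoped BigOperators Classical ComplexOrder

/-- Von Neumann entropy of a matrix: `-∑ λᵢ log λᵢ` over its eigenvalues if it is
Hermitian, and `0` otherwise (junk value). -/
noncomputable def vnEntropy {n : Type*} [Fintype n] [DecidableEq n]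
    (A : Matrix n n ℂ) : ℝ :=
  if hA : A.IsHermitian then ∑ i, Real.negMulLog (hA.eigenvalues i) else 0

/-- Shannon entropy of a (probability) vector. -/
noncomputable def shannonEntropy {F : Type*} [Fintype F] (p : F → ℝ) : ℝ :=
  ∑ n, Real.negMulLog (p n)

section Aux

variable {n m : Type*} [Fintype n] [Fintype m] [DecidableEq n] [DecidableEq m]

lemma det_scalar_X {k : Type*} [Fintype k] [DecidableEq k] :
    (scalar k (X : ℂ[X])).det = X ^ Fintype.card k := by
  rw [show (scalar k X : Matrix k k ℂ[X]) = diagonal (fun _ => X) from rfl, det_diagonal]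
  simp

/-- Rectangular version of `charpoly (A*B)` vs `charpoly (B*A)`. -/
theorem charpoly_aux (A : Matrix n m ℂ) (B : Matrix m n ℂ) :
    X ^ (Fintype.card n) * (B * A).charpoly = X ^ (Fintype.card m) * (A * B).charpoly := by
  classical
  set A' : Matrix n m ℂ[X] := A.map C with hA'
  set B' : Matrix m n ℂ[X] := B.map C with hB'
  set E : Matrix (n ⊕ m) (n ⊕ m) ℂ[X] := fromBlocks (scalar n X) A' B' 1 with hE
  set E' : Matrix (n ⊕ m) (n ⊕ m) ℂ[X] := fromBlocks 1 A' B' (scalar m X) with hE'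
  have hmapAB : (A * B).map C = A' * B' := by
    exact Matrix.map_mul
  have hmapBA : (B * A).map C = B' * A' := by
    exact Matrix.map_mul
  have hdetE : E.det = (A * B).charpoly := by
    have h1 : fromBlocks 1 (-A') 0 1 * E = fromBlocks (charmatrix (A * B)) 0 B' 1 := by
      rw [hE, fromBlocks_multiply, charmatrix, RingHom.mapMatrix_apply, hmapAB]
      simp only [Matrix.one_mul, Matrix.mul_one, Matrix.zero_mul, Matrix.mul_zero,
        Matrix.neg_mul, add_zero, zero_add]
      congr 1 <;> first
        | abel
        | simp
    have := congrArg Matrix.det h1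
    rw [Matrix.det_mul, Matrix.det_fromBlocks_zero₂₁, Matrix.det_fromBlocks_zero₁₂] at this
    simpa [Matrix.charpoly] using this
  have hdetE' : E'.det = (B * A).charpoly := by
    have h1 : fromBlocks 1 0 (-B') 1 * E' = fromBlocks 1 A' 0 (charmatrix (B * A)) := by
      rw [hE', fromBlocks_multiply, charmatrix, RingHom.mapMatrix_apply, hmapBA]
      simp only [Matrix.one_mul, Matrix.mul_one, Matrix.zero_mul, Matrix.mul_zero,
        Matrix.neg_mul, add_zero, zero_add]
      congr 1 <;> first
        | abel
        | simp
    have := congrArg Matrix.det h1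
    rw [Matrix.det_mul, Matrix.det_fromBlocks_zero₁₂, Matrix.det_fromBlocks_zero₂₁] at this
    simpa [Matrix.charpoly] using this
  have hTR : (scalar n X) * A' = A' * (scalar m X) := by
    rw [show (scalar n X : Matrix n n ℂ[X]) = diagonal (fun _ => X) from rfl,
      show (scalar m X : Matrix m m ℂ[X]) = diagonal (fun _ => X) from rfl]
    funext i j
    show ∑ k, (diagonal fun _ => X : Matrix n n ℂ[X]) i k * A' k j
      = ∑ k, A' i k * (diagonal fun _ => X : Matrix m m ℂ[X]) k j
    simp [Matrix.diagonal_apply, mul_comm]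
  have hcomm : (fromBlocks (scalar n X) 0 0 1 : Matrix (n ⊕ m) (n ⊕ m) ℂ[X]) * E'
      = E * fromBlocks 1 0 0 (scalar m X) := by
    rw [hE, hE', fromBlocks_multiply, fromBlocks_multiply]
    simp only [Matrix.one_mul, Matrix.mul_one, Matrix.zero_mul, Matrix.mul_zero,
      add_zero, zero_add, hTR]
    exact congrArg (fun Z => fromBlocks (scalar n X) Z B' (scalar m X)) hTR
  have := congrArg Matrix.det hcomm
  rw [Matrix.det_mul, Matrix.det_mul, hdetE, hdetE',
    Matrix.det_fromBlocks_zero₂₁, Matrix.det_fromBlocks_zero₂₁] at this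
  simp only [det_scalar_X, Matrix.det_one, one_mul, mul_one] at this
  rw [this, mul_comm]

lemma charpoly_mul_comm' (P Q : Matrix n n ℂ) : (P * Q).charpoly = (Q * P).charpoly := by
  have h := charpoly_aux P Q
  exact (mul_left_cancel₀ (pow_ne_zero _ Polynomial.X_ne_zero) h).symm

lemma charpoly_diagonal_eq (v : n → ℂ) :
    (diagonal v).charpoly = ∏ i, (X - C (v i)) := by
  have h : charmatrix (diagonal v) = diagonal (fun i => X - C (v i)) := by
    ext i j
    by_cases h : i = j
    · subst h; simp
    · simp [h, charmatrix_apply_ne _ _ _ h, diagonal_apply_ne _ h]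
  rw [Matrix.charpoly, h, det_diagonal]

lemma IsHermitian.charpoly_eq_prod {A : Matrix n n ℂ} (hA : A.IsHermitian) :
    A.charpoly = ∏ i, (X - C (hA.eigenvalues i : ℂ)) := by
  conv_lhs => rw [hA.spectral_theorem, Unitary.conjStarAlgAut_apply]
  rw [show (hA.eigenvectorUnitary : Matrix n n ℂ) * diagonal (RCLike.ofReal ∘ hA.eigenvalues)
      * (star (hA.eigenvectorUnitary : Matrix n n ℂ))
      = ((hA.eigenvectorUnitary : Matrix n n ℂ) * diagonal (RCLike.ofReal ∘ hA.eigenvalues))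
      * (star (hA.eigenvectorUnitary : Matrix n n ℂ)) from rfl,
    _root_.charpoly_mul_comm', ← Matrix.mul_assoc, Unitary.coe_star_mul_self, Matrix.one_mul]
  exact charpoly_diagonal_eq _

lemma prod_X_sub_C_eq {k : Type*} [Fintype k] (f : k → ℝ) :
    (∏ i, (X - C ((f i : ℂ)))) = ((Finset.univ.val.map fun i => ((f i : ℂ))).map
      fun a => X - C a).prod := by
  rw [Multiset.map_map]
  rfl

lemma prod_X_sub_C_ne_zero {k : Type*} [Fintype k] (f : k → ℝ) :
    ((Finset.univ.val.map fun i => ((f i : ℂ))).map fun a => X - C a).prod ≠ 0 :=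
  Monic.ne_zero <| monic_multiset_prod_of_monic _ (fun a => X - C a)
    (fun a _ => monic_X_sub_C a)

lemma sum_negMulLog_eigenvalues_mul_comm (V : Matrix n m ℂ)
    (h1 : (V * Vᴴ).IsHermitian) (h2 : (Vᴴ * V).IsHermitian) :
    ∑ i, Real.negMulLog (h1.eigenvalues i) = ∑ j, Real.negMulLog (h2.eigenvalues j) := by
  have key := charpoly_aux V Vᴴ
  rw [IsHermitian.charpoly_eq_prod h1, IsHermitian.charpoly_eq_prod h2] at key
  rw [prod_X_sub_C_eq, prod_X_sub_C_eq] at key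
  have hroots := congrArg Polynomial.roots key
  rw [Polynomial.roots_mul (mul_ne_zero (pow_ne_zero _ Polynomial.X_ne_zero)
      (prod_X_sub_C_ne_zero _)),
    Polynomial.roots_mul (mul_ne_zero (pow_ne_zero _ Polynomial.X_ne_zero)
      (prod_X_sub_C_ne_zero _)),
    Polynomial.roots_pow, Polynomial.roots_pow, Polynomial.roots_X,
    Polynomial.roots_multiset_prod_X_sub_C, Polynomial.roots_multiset_prod_X_sub_C] at hroots
  -- sum `negMulLog ∘ Complex.re` over both multisets
  have hsum := congrArg (fun s : Multiset ℂ =>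
    ((s.map fun z => Real.negMulLog z.re)).sum) hroots
  simp only [Multiset.map_add, Multiset.sum_add, Multiset.nsmul_singleton,
    Multiset.map_replicate, Multiset.sum_replicate, Complex.zero_re, Real.negMulLog_zero,
    smul_zero, zero_add, Multiset.map_map, Function.comp_def, Complex.ofReal_re] at hsum
  calc ∑ i, Real.negMulLog (h1.eigenvalues i)
      = ((Finset.univ.val.map fun i => Real.negMulLog (h1.eigenvalues i))).sum := rfl
    _ = ((Finset.univ.val.map fun j => Real.negMulLog (h2.eigenvalues j))).sum := by
        rw [← hsum]
    _ = ∑ j, Real.negMulLog (h2.eigenvalues j) := rfl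

lemma sum_negMulLog_eigenvalues_le_diag {B : Matrix m m ℂ} (hB : B.PosSemidef) :
    ∑ i, Real.negMulLog (hB.1.eigenvalues i) ≤ ∑ i, Real.negMulLog (B i i).re := by
  classical
  set hH : B.IsHermitian := hB.1 with hHdef
  set U : Matrix m m ℂ := (hH.eigenvectorUnitary : Matrix m m ℂ) with hU
  set lam : m → ℝ := hH.eigenvalues with hlam
  have hrow : ∀ i, ∑ k, Complex.normSq (U i k) = 1 := by
    intro i
    have h := congrFun (congrFun (Unitary.coe_mul_star_self hH.eigenvectorUnitary) i) i
    have h2 : ∑ k, U i k * star (U i k) = 1 := by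
      simpa [Matrix.mul_apply, Matrix.star_apply, hU] using h
    have := congrArg Complex.re h2
    simpa [Complex.mul_conj, Complex.re_sum] using this
  have hcol : ∀ k, ∑ i, Complex.normSq (U i k) = 1 := by
    intro k
    have h := congrFun (congrFun (Unitary.coe_star_mul_self hH.eigenvectorUnitary) k) k
    have h2 : ∑ i, star (U i k) * U i k = 1 := by
      simpa [Matrix.mul_apply, Matrix.star_apply, hU] using h
    have := congrArg Complex.re h2
    simpa [mul_comm, Complex.mul_conj, Complex.re_sum] using this
  have hBii : ∀ i, (B i i).re = ∑ k, Complex.normSq (U i k) * lam k := by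
    intro i
    have hb : B i i = ∑ k, (lam k : ℂ) * (U i k * star (U i k)) := by
      conv_lhs => rw [hH.spectral_theorem, Unitary.conjStarAlgAut_apply]
      rw [Matrix.mul_apply]
      refine Finset.sum_congr rfl fun k _ => ?_
      rw [Matrix.mul_diagonal, Matrix.star_apply]
      show U i k * ((lam k : ℝ) : ℂ) * star (U i k) = _
      ring
    have := congrArg Complex.re hb
    simpa [Complex.mul_conj, Complex.re_sum, ← Complex.ofReal_mul, mul_comm] using this
  have hjensen : ∀ i, ∑ k, Complex.normSq (U i k) * Real.negMulLog (lam k)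
      ≤ Real.negMulLog (B i i).re := by
    intro i
    rw [hBii i]
    have := Real.concaveOn_negMulLog.le_map_sum (t := Finset.univ)
      (w := fun k => Complex.normSq (U i k)) (p := lam)
      (fun k _ => Complex.normSq_nonneg _) (hrow i)
      (fun k _ => hB.eigenvalues_nonneg k)
    simpa [smul_eq_mul] using this
  calc ∑ k, Real.negMulLog (lam k)
      = ∑ k, (∑ i, Complex.normSq (U i k)) * Real.negMulLog (lam k) := by
        simp [hcol]
    _ = ∑ i, ∑ k, Complex.normSq (U i k) * Real.negMulLog (lam k) := by
        rw [Finset.sum_comm]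
        simp [Finset.sum_mul]
    _ ≤ ∑ i, Real.negMulLog (B i i).re := Finset.sum_le_sum fun i _ => hjensen i


end Aux

/-- The von Neumann entropy of a mixture is at most the Shannon entropy of the
mixing distribution plus the average entropy of the components. -/
theorem vnEntropy_mixture_le
    {d : ℕ} {F : Type*} [Fintype F]
    (p : F → ℝ) (hp0 : ∀ n, 0 ≤ p n) (hp1 : ∑ n, p n = 1)
    (ρ : F → Matrix (Fin d) (Fin d) ℂ)
    (hρ : ∀ n, (ρ n).PosSemidef) (hρtr : ∀ n, (ρ n).trace = 1) :
    vnEntropy (∑ n, p n • ρ n) ≤ shannonEntropy p + ∑ n, p n * vnEntropy (ρ n) := by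
  classical
  set μ : F → Fin d → ℝ := fun n => ((hρ n).1).eigenvalues with hμ
  set u : F → Matrix (Fin d) (Fin d) ℂ := fun n => ((hρ n).1.eigenvectorUnitary : _) with hu
  have hμ0 : ∀ n j, 0 ≤ μ n j := fun n j => (hρ n).eigenvalues_nonneg j
  have hw0 : ∀ n j, 0 ≤ p n * μ n j := fun n j => mul_nonneg (hp0 n) (hμ0 n j)
  have hentry : ∀ n i i', ρ n i i' = ∑ j, (μ n j : ℂ) * (u n i j * star (u n i' j)) := by
    intro n i i'
    conv_lhs => rw [((hρ n).1).spectral_theorem, Unitary.conjStarAlgAut_apply]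
    rw [Matrix.mul_apply]
    refine Finset.sum_congr rfl fun j _ => ?_
    rw [Matrix.mul_diagonal, Matrix.star_apply]
    show u n i j * ((μ n j : ℝ) : ℂ) * star (u n i' j) = _
    ring
  have hμsum : ∀ n, ∑ j, μ n j = 1 := by
    intro n
    have htr : (ρ n).trace = ∑ j, (μ n j : ℂ) := by
      conv_lhs => rw [((hρ n).1).spectral_theorem, Unitary.conjStarAlgAut_apply]
      rw [Matrix.trace_mul_comm, ← Matrix.mul_assoc, Unitary.coe_star_mul_self,
        Matrix.one_mul, Matrix.trace_diagonal]
      rfl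
    have h1 : ∑ j, (μ n j : ℂ) = 1 := by rw [← htr, hρtr n]
    have := congrArg Complex.re h1
    simpa [Complex.re_sum] using this
  -- the rectangular "square root" of the mixture
  set V : Matrix (Fin d) (F × Fin d) ℂ :=
    fun i x => (Real.sqrt (p x.1 * μ x.1 x.2) : ℂ) * u x.1 i x.2 with hV
  have hVV : V * Vᴴ = ∑ n, p n • ρ n := by
    ext i i'
    rw [Matrix.mul_apply, Matrix.sum_apply]
    rw [Fintype.sum_prod_type]
    refine Finset.sum_congr rfl fun n _ => ?_
    have hterm : ∀ j, V i (n, j) * Vᴴ (n, j) i'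
        = ((p n * μ n j : ℝ) : ℂ) * (u n i j * star (u n i' j)) := by
      intro j
      calc V i (n, j) * Vᴴ (n, j) i'
          = (((p n * μ n j).sqrt : ℂ) * ((p n * μ n j).sqrt : ℂ))
            * (u n i j * star (u n i' j)) := by
            rw [Matrix.conjTranspose_apply, hV]
            simp only [star_mul', Complex.star_def, Complex.conj_ofReal]
            ring
        _ = _ := by rw [← Complex.ofReal_mul, Real.mul_self_sqrt (hw0 n j)]
    calc ∑ j, V i (n, j) * Vᴴ (n, j) i'
        = ∑ j, ((p n * μ n j : ℝ) : ℂ) * (u n i j * star (u n i' j)) :=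
          Finset.sum_congr rfl fun j _ => hterm j
      _ = (p n • ρ n) i i' := by
          rw [Matrix.smul_apply, hentry n i i', Complex.real_smul, Finset.mul_sum]
          refine Finset.sum_congr rfl fun j _ => ?_
          push_cast
          ring
  -- positive semidefiniteness facts
  have hBpsd : (Vᴴ * V).PosSemidef := Matrix.posSemidef_conjTranspose_mul_self V
  have hApsd : (V * Vᴴ).PosSemidef := Matrix.posSemidef_self_mul_conjTranspose V
  have hdiagB : ∀ x : F × Fin d, ((Vᴴ * V) x x).re = p x.1 * μ x.1 x.2 := by
    rintro ⟨n, j⟩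
    have hcol : ∑ i, star (u n i j) * u n i j = 1 := by
      have h := congrFun (congrFun (Unitary.coe_star_mul_self ((hρ n).1).eigenvectorUnitary) j) j
      simpa [Matrix.mul_apply, Matrix.star_apply, hu] using h
    have hBx : (Vᴴ * V) (n, j) (n, j)
        = ((p n * μ n j : ℝ) : ℂ) * ∑ i, star (u n i j) * u n i j := by
      rw [Matrix.mul_apply, Finset.mul_sum]
      refine Finset.sum_congr rfl fun i _ => ?_
      rw [Matrix.conjTranspose_apply, hV]
      simp only [star_mul', Complex.star_def, Complex.conj_ofReal]
      rw [show ((p n * μ n j : ℝ) : ℂ)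
          = ((p n * μ n j).sqrt : ℂ) * ((p n * μ n j).sqrt : ℂ) by
        rw [← Complex.ofReal_mul, Real.mul_self_sqrt (hw0 n j)]]
      ring
    rw [hBx, hcol, mul_one, Complex.ofReal_re]
  -- the main chain of (in)equalities
  rw [← hVV]
  have h1 : (V * Vᴴ).IsHermitian := hApsd.1
  have h2 : (Vᴴ * V).IsHermitian := hBpsd.1
  rw [vnEntropy, dif_pos h1]
  calc ∑ i, Real.negMulLog (h1.eigenvalues i)
      = ∑ x, Real.negMulLog (h2.eigenvalues x) :=
        sum_negMulLog_eigenvalues_mul_comm V h1 h2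
    _ ≤ ∑ x, Real.negMulLog (((Vᴴ * V) x x).re) :=
        sum_negMulLog_eigenvalues_le_diag hBpsd
    _ = ∑ n, ∑ j, Real.negMulLog (p n * μ n j) := by
        rw [Fintype.sum_prod_type]
        exact Finset.sum_congr rfl fun n _ => Finset.sum_congr rfl fun j _ => by
          rw [hdiagB (n, j)]
    _ = ∑ n, (Real.negMulLog (p n) * (∑ j, μ n j)
          + p n * ∑ j, Real.negMulLog (μ n j)) := by
        refine Finset.sum_congr rfl fun n _ => ?_
        rw [Finset.mul_sum, Finset.mul_sum, ← Finset.sum_add_distrib]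
        refine Finset.sum_congr rfl fun j _ => ?_
        rw [Real.negMulLog_mul]
        ring
    _ = shannonEntropy p + ∑ n, p n * vnEntropy (ρ n) := by
        rw [shannonEntropy, ← Finset.sum_add_distrib]
        refine Finset.sum_congr rfl fun n _ => ?_
        rw [hμsum n, mul_one, vnEntropy, dif_pos (hρ n).1]
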